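/- Let U_G ∈ ℝ^{n×n} and U_F ∈ ℝ^{n'×n'} be orthogonal matrices, and let f ∈ ℝⁿ and e ∈ ℝ^{n'} be positive definite graph basis functions with respect to U_G and U_F respectively, i.e., the kernel matrices K_f = U_G · diag(U_Gᵀ f) · U_Gᵀ and K_e = U_F · diag(U_Fᵀ e) · U_Fᵀ are positive definite. Then the Kronecker product vector f ⊗ e ∈ ℝ^{nn'} is a positive definite graph basis function with respect to the orthogonal matrix U_G ⊗ U_F, i.e., the matrix (U_G ⊗ U_F) · diag((U_G ⊗ U_F)ᵀ (f ⊗ e)) · (U_G ⊗ U_F)ᵀ is positive definite; moreover this matrix equals K_f ⊗ K_e. -/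

import Mathlib

open Matrix
open scoped Kronecker

private lemma posdef_conj {m : Type*} [Fintype m] [DecidableEq m]
    (B M : Matrix m m ℝ) (hB : Bᵀ * B = 1) (hM : M.PosDef) :
    (B * M * Bᵀ).PosDef := by
  have hB' : B * Bᵀ = 1 := mul_eq_one_comm.mp hB
  have hBH : Bᴴ = Bᵀ := by ext i j; simp [conjTranspose]
  refine posDef_iff_dotProduct_mulVec.mpr ⟨?_, ?_⟩
  · have := Matrix.isHermitian_mul_mul_conjTranspose B hM.isHermitian
    rwa [hBH] at this
  · intro x hx
    have hx' : Bᵀ *ᵥ x ≠ 0 := by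
      intro h
      apply hx
      have : B *ᵥ (Bᵀ *ᵥ x) = 0 := by rw [h, mulVec_zero]
      rwa [mulVec_mulVec, hB', one_mulVec] at this
    have h1 : (B * M * Bᵀ) *ᵥ x = B *ᵥ (M *ᵥ (Bᵀ *ᵥ x)) := by
      simp [← mulVec_mulVec, Matrix.mul_assoc]
    have := hM.dotProduct_mulVec_pos hx'
    simp only [star_trivial] at this ⊢
    rw [h1, dotProduct_mulVec, ← Matrix.mulVec_transpose]
    exact this

private lemma kron_mulVec {n n' : ℕ}
    (A : Matrix (Fin n) (Fin n) ℝ) (B : Matrix (Fin n') (Fin n') ℝ)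
    (f : Fin n → ℝ) (e : Fin n' → ℝ) :
    (A ⊗ₖ B) *ᵥ (fun p : Fin n × Fin n' => f p.1 * e p.2)
      = fun p => (A *ᵥ f) p.1 * (B *ᵥ e) p.2 := by
  funext p
  simp only [mulVec, dotProduct, kroneckerMap_apply, Fintype.sum_prod_type]
  rw [Finset.sum_mul_sum]
  congr 1; funext i; congr 1; funext j; ring

theorem stmt_5 {n n' : ℕ}
    (UG : Matrix (Fin n) (Fin n) ℝ) (UF : Matrix (Fin n') (Fin n') ℝ)
    (hUG : UGᵀ * UG = 1) (hUF : UFᵀ * UF = 1)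
    (f : Fin n → ℝ) (e : Fin n' → ℝ)
    (hf : (UG * Matrix.diagonal (UGᵀ *ᵥ f) * UGᵀ).PosDef)
    (he : (UF * Matrix.diagonal (UFᵀ *ᵥ e) * UFᵀ).PosDef) :
    ((UG ⊗ₖ UF) *
        Matrix.diagonal ((UG ⊗ₖ UF)ᵀ *ᵥ fun p : Fin n × Fin n' => f p.1 * e p.2) *
        (UG ⊗ₖ UF)ᵀ).PosDef ∧
      (UG ⊗ₖ UF) *
          Matrix.diagonal ((UG ⊗ₖ UF)ᵀ *ᵥ fun p : Fin n × Fin n' => f p.1 * e p.2) *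
          (UG ⊗ₖ UF)ᵀ =
        (UG * Matrix.diagonal (UGᵀ *ᵥ f) * UGᵀ) ⊗ₖ (UF * Matrix.diagonal (UFᵀ *ᵥ e) * UFᵀ) := by
  have hT : (UG ⊗ₖ UF)ᵀ = UGᵀ ⊗ₖ UFᵀ := by
    simp [Matrix.kroneckerMap_transpose]
  have hvec : (UG ⊗ₖ UF)ᵀ *ᵥ (fun p : Fin n × Fin n' => f p.1 * e p.2)
      = fun p => (UGᵀ *ᵥ f) p.1 * (UFᵀ *ᵥ e) p.2 := by
    rw [hT]; exact kron_mulVec _ _ _ _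
  have hdiag : Matrix.diagonal ((UG ⊗ₖ UF)ᵀ *ᵥ fun p : Fin n × Fin n' => f p.1 * e p.2)
      = (Matrix.diagonal (UGᵀ *ᵥ f)) ⊗ₖ (Matrix.diagonal (UFᵀ *ᵥ e)) := by
    rw [hvec, Matrix.kroneckerMap_diagonal_diagonal _ (zero_mul) (mul_zero)]
  have heq : (UG ⊗ₖ UF) *
          Matrix.diagonal ((UG ⊗ₖ UF)ᵀ *ᵥ fun p : Fin n × Fin n' => f p.1 * e p.2) *
          (UG ⊗ₖ UF)ᵀ =
        (UG * Matrix.diagonal (UGᵀ *ᵥ f) * UGᵀ) ⊗ₖ (UF * Matrix.diagonal (UFᵀ *ᵥ e) * UFᵀ) := by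
    rw [hdiag, hT, ← Matrix.mul_kronecker_mul, ← Matrix.mul_kronecker_mul]
  refine ⟨?_, heq⟩
  -- positive definiteness
  have hUGG : UG * UGᵀ = 1 := mul_eq_one_comm.mp hUG
  have hUFF : UF * UFᵀ = 1 := mul_eq_one_comm.mp hUF
  have hdf : (Matrix.diagonal (UGᵀ *ᵥ f)).PosDef := by
    have := posdef_conj UGᵀ _ (by rwa [transpose_transpose]) hf
    have h2 : UGᵀ * (UG * Matrix.diagonal (UGᵀ *ᵥ f) * UGᵀ) * UGᵀᵀ
        = Matrix.diagonal (UGᵀ *ᵥ f) := by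
      rw [transpose_transpose]
      rw [show UGᵀ * (UG * Matrix.diagonal (UGᵀ *ᵥ f) * UGᵀ) * UG
        = (UGᵀ * UG) * Matrix.diagonal (UGᵀ *ᵥ f) * (UGᵀ * UG) by
          simp only [Matrix.mul_assoc], hUG]
      simp
    rwa [h2] at this
  have hde : (Matrix.diagonal (UFᵀ *ᵥ e)).PosDef := by
    have := posdef_conj UFᵀ _ (by rwa [transpose_transpose]) he
    have h2 : UFᵀ * (UF * Matrix.diagonal (UFᵀ *ᵥ e) * UFᵀ) * UFᵀᵀ
        = Matrix.diagonal (UFᵀ *ᵥ e) := by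
      rw [transpose_transpose]
      rw [show UFᵀ * (UF * Matrix.diagonal (UFᵀ *ᵥ e) * UFᵀ) * UF
        = (UFᵀ * UF) * Matrix.diagonal (UFᵀ *ᵥ e) * (UFᵀ * UF) by
          simp only [Matrix.mul_assoc], hUF]
      simp
    rwa [h2] at this
  have hposf : ∀ i, 0 < (UGᵀ *ᵥ f) i := Matrix.posDef_diagonal_iff.mp hdf
  have hpose : ∀ i, 0 < (UFᵀ *ᵥ e) i := Matrix.posDef_diagonal_iff.mp hde
  have hdpos : (Matrix.diagonal ((UG ⊗ₖ UF)ᵀ *ᵥ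
      fun p : Fin n × Fin n' => f p.1 * e p.2)).PosDef := by
    rw [hvec]
    exact Matrix.posDef_diagonal_iff.mpr fun p => mul_pos (hposf p.1) (hpose p.2)
  have hVorth : (UG ⊗ₖ UF)ᵀ * (UG ⊗ₖ UF) = 1 := by
    rw [hT, ← Matrix.mul_kronecker_mul, hUG, hUF, Matrix.one_kronecker_one]
  exact posdef_conj _ _ hVorth hdpos
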